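/- Let γ : [0, 2π] → ℝ² be continuous with γ(0) = γ(2π), injective on [0, 2π), and of finite total variation (so J = γ([0,2π]) is a rectifiable Jordan curve). Suppose J is locally a Lipschitz graph: for every x ∈ J there exist an open ball B centered at x, a rotation ρ of ℝ², and a Lipschitz function b : ℝ → ℝ such that B ∩ J = B ∩ ρ({(t, b(t)) : t ∈ ℝ}). Then J has the chord–arc property: there exists a constant C such that for all s, t ∈ [0, 2π], the smaller of the lengths of the two arcs of J between γ(s) and γ(t) (i.e., the minimum of the total variation of γ on [min(s,t), max(s,t)] and the total variation of γ on the complementary pair of intervals [0, min(s,t)] ∪ [max(s,t), 2π]) is at most C · ‖γ(s) − γ(t)‖. -/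

import Mathlib

open Metric Set
open scoped Real

lemma evar_le_of_mono (γ : ℝ → ℂ) (s : Set ℝ) (g : ℝ → ℝ) (M : ℝ)
    (hg : ∀ u ∈ s, ∀ v ∈ s, u ≤ v → edist (γ v) (γ u) ≤ ENNReal.ofReal (g v - g u))
    (hmono : ∀ u ∈ s, ∀ v ∈ s, u ≤ v → g u ≤ g v)
    (hbd : ∀ u ∈ s, ∀ v ∈ s, g v - g u ≤ M) :
    eVariationOn γ s ≤ ENNReal.ofReal M := by
  refine iSup_le ?_
  rintro ⟨n, u, hu, us⟩
  calc ∑ i ∈ Finset.range n, edist (γ (u (i + 1))) (γ (u i))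
      ≤ ∑ i ∈ Finset.range n, ENNReal.ofReal (g (u (i+1)) - g (u i)) := by
        exact Finset.sum_le_sum fun i _ => hg _ (us i) _ (us (i+1)) (hu (Nat.le_succ i))
    _ = ENNReal.ofReal (∑ i ∈ Finset.range n, (g (u (i+1)) - g (u i))) := by
        rw [ENNReal.ofReal_sum_of_nonneg]
        exact fun i _ => sub_nonneg.2 (hmono _ (us i) _ (us (i+1)) (hu (Nat.le_succ i)))
    _ = ENNReal.ofReal (g (u n) - g (u 0)) := by rw [Finset.sum_range_sub (fun i => g (u i))]
    _ ≤ ENNReal.ofReal M := ENNReal.ofReal_le_ofReal (hbd _ (us 0) _ (us n))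

lemma injOn_arc (γ : ℝ → ℂ) (hclosed : γ 0 = γ (2 * π)) (hinj : InjOn γ (Ico (0:ℝ) (2 * π)))
    {m M : ℝ} (hm : 0 ≤ m) (hM : M ≤ 2 * π) (hd : M - m < 2 * π) :
    InjOn γ (Icc m M) := by
  have key : ∀ u ∈ Icc m M, ∀ v ∈ Icc m M, γ u = γ v → u < v → False := by
    intro u hu v hv he huv
    rcases eq_or_lt_of_le (hv.2.trans_eq rfl : v ≤ M) with hv2 | hv2
    · -- v = M; subcases on M = 2π
      rcases lt_or_eq_of_le (hv.2.trans hM : v ≤ 2 * π) with hvlt | hveq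
      · exact absurd (hinj ⟨hm.trans hu.1, (huv.trans_le hv.2).trans_le hM |>.trans_eq rfl⟩
          ⟨hm.trans hv.1, hvlt⟩ he) (ne_of_lt huv)
      · -- v = 2π
        have h0 : γ u = γ 0 := by rw [he, hveq, hclosed]
        have hu2 : u < 2 * π := huv.trans_le (hv.2.trans hM)
        have := hinj ⟨hm.trans hu.1, hu2⟩ ⟨le_refl 0, by positivity⟩ h0
        -- u = 0, so m ≤ 0, and M ≥ v = 2π, contradicting hd
        have hm0 : m ≤ 0 := this ▸ hu.1
        have hM2 : 2 * π ≤ M := hveq ▸ hv.2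
        linarith
    · exact absurd (hinj ⟨hm.trans hu.1, (huv.trans hv2).trans_le hM⟩
        ⟨hm.trans hv.1, hv2.trans_le hM⟩ he) (ne_of_lt huv)
  intro u hu v hv he
  rcases lt_trichotomy u v with h | h | h
  · exact absurd (key u hu v hv he h) id
  · exact h
  · exact absurd (key v hv u hu he.symm h) id

lemma graph_param {w : ℂ} (hw : ‖w‖ = 1) {b : ℝ → ℝ} {z : ℂ}
    (h : z ∈ range fun t : ℝ => w * ((t:ℂ) + (b t : ℂ) * Complex.I)) :
    (starRingEnd ℂ) w * z = (((starRingEnd ℂ) w * z).re : ℂ) +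
      (b (((starRingEnd ℂ) w * z).re) : ℂ) * Complex.I := by
  obtain ⟨t, ht⟩ := h
  have hww : (starRingEnd ℂ) w * w = 1 := by
    rw [mul_comm, Complex.mul_conj, Complex.normSq_eq_norm_sq, hw]; norm_num
  have h1 : (starRingEnd ℂ) w * z = (t:ℂ) + (b t : ℂ) * Complex.I := by
    rw [← ht, ← mul_assoc, hww, one_mul]
  have h2 : ((starRingEnd ℂ) w * z).re = t := by rw [h1]; simp
  conv_lhs => rw [h1]
  rw [h2]

lemma graph_dist {w : ℂ} (hw : ‖w‖ = 1) {K : NNReal} {b : ℝ → ℝ}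
    (hb : LipschitzWith K b) {z₁ z₂ : ℂ}
    (h₁ : z₁ ∈ range fun t : ℝ => w * ((t:ℂ) + (b t : ℂ) * Complex.I))
    (h₂ : z₂ ∈ range fun t : ℝ => w * ((t:ℂ) + (b t : ℂ) * Complex.I)) :
    ‖z₁ - z₂‖ ≤ (1 + (K:ℝ)) * |((starRingEnd ℂ) w * z₁).re - ((starRingEnd ℂ) w * z₂).re| ∧
    |((starRingEnd ℂ) w * z₁).re - ((starRingEnd ℂ) w * z₂).re| ≤ ‖z₁ - z₂‖ := by
  have hww : ‖(starRingEnd ℂ) w‖ = 1 := by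
    rw [Complex.norm_conj, hw]
  have hnorm : ‖(starRingEnd ℂ) w * z₁ - (starRingEnd ℂ) w * z₂‖ = ‖z₁ - z₂‖ := by
    rw [← mul_sub, norm_mul, hww, one_mul]
  set t₁ := ((starRingEnd ℂ) w * z₁).re
  set t₂ := ((starRingEnd ℂ) w * z₂).re
  have e₁ := graph_param hw h₁
  have e₂ := graph_param hw h₂
  constructor
  · rw [← hnorm, e₁, e₂]
    have : ((t₁:ℂ) + (b t₁ : ℂ) * Complex.I) - ((t₂:ℂ) + (b t₂ : ℂ) * Complex.I)
        = ((t₁ - t₂ : ℝ) : ℂ) + ((b t₁ - b t₂ : ℝ) : ℂ) * Complex.I := by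
      push_cast; ring
    rw [this]
    calc ‖((t₁ - t₂ : ℝ) : ℂ) + ((b t₁ - b t₂ : ℝ) : ℂ) * Complex.I‖
        ≤ ‖((t₁ - t₂ : ℝ) : ℂ)‖ + ‖((b t₁ - b t₂ : ℝ) : ℂ) * Complex.I‖ := norm_add_le _ _
      _ = |t₁ - t₂| + |b t₁ - b t₂| := by
          rw [norm_mul]
          push_cast
          simp [Complex.norm_real, Complex.norm_I, ← Complex.ofReal_sub,
            Real.norm_eq_abs]
      _ ≤ |t₁ - t₂| + K * |t₁ - t₂| := by
          have := hb.dist_le_mul t₁ t₂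
          rw [Real.dist_eq, Real.dist_eq] at this
          linarith
      _ = (1 + (K:ℝ)) * |t₁ - t₂| := by ring
  · calc |t₁ - t₂| = |((starRingEnd ℂ) w * z₁ - (starRingEnd ℂ) w * z₂).re| := by
          rw [Complex.sub_re]
      _ ≤ ‖(starRingEnd ℂ) w * z₁ - (starRingEnd ℂ) w * z₂‖ := Complex.abs_re_le_norm _
      _ = ‖z₁ - z₂‖ := hnorm

lemma arcBound (γ : ℝ → ℂ) {p q : ℝ} (hpq : p ≤ q) {f : ℝ → ℝ} {L c : ℝ} (hL0 : 0 ≤ L)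
    (hm : StrictMonoOn f (Icc p q) ∨ StrictAntiOn f (Icc p q))
    (kb1 : ∀ u ∈ Icc p q, ∀ v ∈ Icc p q, ‖γ u - γ v‖ ≤ L * |f u - f v|)
    (hc : |f p - f q| ≤ c) :
    eVariationOn γ (Icc p q) ≤ ENNReal.ofReal (L * c) := by
  obtain ⟨F, hF, hFf⟩ : ∃ F : ℝ → ℝ, MonotoneOn F (Icc p q) ∧
      ∀ u v, |F u - F v| = |f u - f v| := by
    rcases hm with hm | hm
    · exact ⟨f, hm.monotoneOn, fun u v => rfl⟩
    · refine ⟨fun u => -f u, ?_, fun u v => by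
        rw [show -f u - -f v = f v - f u by ring, abs_sub_comm]⟩
      intro u hu v hv huv
      rcases eq_or_lt_of_le huv with h | h
      · subst h; exact le_rfl
      · exact le_of_lt (neg_lt_neg (hm hu hv h))
  have hpm : p ∈ Icc p q := ⟨le_refl _, hpq⟩
  have hqm : q ∈ Icc p q := ⟨hpq, le_refl _⟩
  apply evar_le_of_mono γ _ (fun u => L * F u) (L * c)
  · intro u hu v hv huv
    rw [edist_dist, dist_eq_norm]
    apply ENNReal.ofReal_le_ofReal
    calc ‖γ v - γ u‖ ≤ L * |f v - f u| := kb1 v hv u hu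
      _ = L * |F v - F u| := by rw [hFf]
      _ = L * (F v - F u) := by rw [abs_of_nonneg (sub_nonneg.2 (hF hu hv huv))]
      _ = L * F v - L * F u := by ring
  · intro u hu v hv huv
    exact mul_le_mul_of_nonneg_left (hF hu hv huv) hL0
  · intro u hu v hv
    have h1 : F v ≤ F q := hF hv hqm hv.2
    have h2 : F p ≤ F u := hF hpm hu hu.1
    have h3 : F q - F p ≤ |F p - F q| := by rw [abs_sub_comm]; exact le_abs_self _
    have h4 : F v - F u ≤ c := by rw [hFf] at h3; linarith [hc]
    calc L * F v - L * F u = L * (F v - F u) := by ring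
      _ ≤ L * c := mul_le_mul_of_nonneg_left h4 hL0


/-- A rectifiable Jordan curve in the plane (identified with `ℂ`)
that is locally the graph of a Lipschitz function (up to a rotation, i.e.
multiplication by a unimodular complex number) has the chord–arc property:
the shorter arc between two points has length at most a constant times the
distance between the points. -/
theorem lipschitz_jordan_curve_chord_arc
    (γ : ℝ → ℂ)
    (hcont : ContinuousOn γ (Icc (0:ℝ) (2 * π)))
    (hclosed : γ 0 = γ (2 * π))
    (hinj : InjOn γ (Ico (0:ℝ) (2 * π)))
    (hrect : eVariationOn γ (Icc (0:ℝ) (2 * π)) < ⊤)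
    (J : Set ℂ) (hJ : J = γ '' Icc (0:ℝ) (2 * π))
    (hgraph : ∀ x ∈ J, ∃ ε > (0:ℝ), ∃ w : ℂ, ‖w‖ = 1 ∧
      ∃ b : ℝ → ℝ, (∃ K : NNReal, LipschitzWith K b) ∧
        ball x ε ∩ J =
          ball x ε ∩ (range fun t : ℝ => w * ((t : ℂ) + (b t : ℂ) * Complex.I))) :
    ∃ C : ℝ, ∀ s ∈ Icc (0:ℝ) (2 * π), ∀ t ∈ Icc (0:ℝ) (2 * π),
      min (eVariationOn γ (Icc (min s t) (max s t)))
          (eVariationOn γ (Icc (0:ℝ) (min s t) ∪ Icc (max s t) (2 * π)))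
        ≤ ENNReal.ofReal (C * ‖γ s - γ t‖) := by
  have hπ : (3:ℝ) < π := Real.pi_gt_three
  have h2π : (0:ℝ) < 2 * π := by linarith
  by_contra hcon
  push_neg at hcon
  choose S hS T hT hlt using hcon
  -- the chord lengths tend to zero
  have hVlt := hrect
  have hVne : eVariationOn γ (Icc (0:ℝ) (2 * π)) ≠ ⊤ := hVlt.ne
  have hchord : ∀ C : ℝ, 0 < C → ‖γ (S C) - γ (T C)‖ ≤
      (eVariationOn γ (Icc (0:ℝ) (2 * π))).toReal / C := by
    intro C hC
    have h1 : ENNReal.ofReal (C * ‖γ (S C) - γ (T C)‖) <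
        eVariationOn γ (Icc (0:ℝ) (2 * π)) := by
      refine lt_of_lt_of_le (hlt C) (le_trans (min_le_left _ _) ?_)
      refine eVariationOn.mono γ (Icc_subset_Icc ?_ ?_)
      · exact le_min (hS C).1 (hT C).1
      · exact max_le (hS C).2 (hT C).2
    rw [ENNReal.ofReal_lt_iff_lt_toReal (by positivity) hVne] at h1
    rw [le_div_iff₀ hC]
    nlinarith [norm_nonneg (γ (S C) - γ (T C))]
  have hchord0 : Filter.Tendsto (fun n : ℕ => ‖γ (S n) - γ (T n)‖) Filter.atTop (nhds 0) := by
    apply squeeze_zero' (Filter.Eventually.of_forall fun n => norm_nonneg _)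
      (g := fun n : ℕ => (eVariationOn γ (Icc (0:ℝ) (2 * π))).toReal / n)
    · filter_upwards [Filter.eventually_ge_atTop 1] with n hn
      exact hchord n (by exact_mod_cast hn)
    · exact tendsto_const_div_atTop_nhds_zero_nat _
  -- compactness: extract a convergent subsequence
  obtain ⟨⟨a, b⟩, habI, φ, hφ, hconv⟩ :=
    (isCompact_Icc.prod isCompact_Icc).tendsto_subseq
      (x := fun n : ℕ => ((S n, T n) : ℝ × ℝ)) (fun n => ⟨hS n, hT n⟩)
  have haI : a ∈ Icc (0:ℝ) (2 * π) := habI.1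
  have hbI : b ∈ Icc (0:ℝ) (2 * π) := habI.2
  have hSa : Filter.Tendsto (fun n => S (φ n)) Filter.atTop (nhds a) :=
    (continuous_fst.tendsto _).comp hconv
  have hTb : Filter.Tendsto (fun n => T (φ n)) Filter.atTop (nhds b) :=
    (continuous_snd.tendsto _).comp hconv
  have hγa : Filter.Tendsto (fun n => γ (S (φ n))) Filter.atTop (nhds (γ a)) :=
    (hcont a haI).tendsto.comp
      (tendsto_nhdsWithin_of_tendsto_nhds_of_eventually_within _ hSa
        (Filter.Eventually.of_forall fun n => hS _))
  have hγb : Filter.Tendsto (fun n => γ (T (φ n))) Filter.atTop (nhds (γ b)) :=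
    (hcont b hbI).tendsto.comp
      (tendsto_nhdsWithin_of_tendsto_nhds_of_eventually_within _ hTb
        (Filter.Eventually.of_forall fun n => hT _))
  have hγab : γ a = γ b := by
    have h3 : Filter.Tendsto (fun n => ‖γ (S (φ n)) - γ (T (φ n))‖) Filter.atTop
        (nhds ‖γ a - γ b‖) := (hγa.sub hγb).norm
    have h4 : Filter.Tendsto (fun n => ‖γ (S (φ n)) - γ (T (φ n))‖) Filter.atTop (nhds 0) :=
      hchord0.comp hφ.tendsto_atTop
    have := tendsto_nhds_unique h3 h4
    rwa [norm_eq_zero, sub_eq_zero] at this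
  -- dichotomy for the limit parameters
  have hminI : min a b ∈ Icc (0:ℝ) (2 * π) := ⟨le_min haI.1 hbI.1, min_le_of_left_le haI.2⟩
  have hmaxI : max a b ∈ Icc (0:ℝ) (2 * π) := ⟨le_max_of_le_left haI.1, max_le haI.2 hbI.2⟩
  have hγmm : γ (min a b) = γ (max a b) := by
    rcases le_total a b with h | h
    · rw [min_eq_left h, max_eq_right h]; exact hγab
    · rw [min_eq_right h, max_eq_left h]; exact hγab.symm
  have hmn : Filter.Tendsto (fun n => min (S (φ n)) (T (φ n))) Filter.atTop
      (nhds (min a b)) := hSa.min hTb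
  have hMn : Filter.Tendsto (fun n => max (S (φ n)) (T (φ n))) Filter.atTop
      (nhds (max a b)) := hSa.max hTb
  rcases eq_or_lt_of_le (min_le_max : min a b ≤ max a b) with heq | hltab
  · -- Case A : min a b = max a b
    have hxJ : γ (min a b) ∈ J := hJ ▸ mem_image_of_mem γ hminI
    obtain ⟨ε, hε, w, hw, b', ⟨K, hb⟩, hball⟩ := hgraph _ hxJ
    set L := 1 + (K:ℝ) with hLdef
    have hL1 : (1:ℝ) ≤ L := le_add_of_nonneg_right K.coe_nonneg
    have hL0 : (0:ℝ) ≤ L := by linarith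
    obtain ⟨δ, hδ, hδball⟩ : ∃ δ > 0, ∀ u ∈ Icc (0:ℝ) (2*π), |u - min a b| < δ →
        γ u ∈ ball (γ (min a b)) ε := by
      obtain ⟨δ, hδ, h⟩ := (Metric.continuousWithinAt_iff.mp (hcont _ hminI)) ε hε
      exact ⟨δ, hδ, fun u hu hud => mem_ball.2 (h hu (by rwa [Real.dist_eq]))⟩
    have ev1 : ∀ᶠ n in Filter.atTop, |min (S (φ n)) (T (φ n)) - min a b| < δ := by
      have := Metric.tendsto_nhds.mp hmn δ hδ
      simpa [Real.dist_eq] using this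
    have ev2 : ∀ᶠ n in Filter.atTop, |max (S (φ n)) (T (φ n)) - min a b| < δ := by
      have h' := Metric.tendsto_nhds.mp hMn δ hδ
      rw [← heq] at h'
      simpa [Real.dist_eq] using h'
    have ev3 : ∀ᶠ n in Filter.atTop,
        max (S (φ n)) (T (φ n)) - min (S (φ n)) (T (φ n)) < 2*π := by
      have h0 : Filter.Tendsto
          (fun n => max (S (φ n)) (T (φ n)) - min (S (φ n)) (T (φ n)))
          Filter.atTop (nhds 0) := by
        have := hMn.sub hmn
        rwa [← heq, sub_self] at this
      filter_upwards [Metric.tendsto_nhds.mp h0 (2*π) h2π] with n hn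
      have := (abs_lt.mp (by simpa [Real.dist_eq] using hn)).2
      linarith
    have ev4 : ∀ᶠ n in Filter.atTop, 3 * L ≤ (φ n : ℝ) := by
      filter_upwards [Filter.eventually_ge_atTop ⌈3 * L⌉₊] with n hn
      calc 3 * L ≤ (⌈3 * L⌉₊ : ℝ) := Nat.le_ceil _
        _ ≤ (n : ℝ) := by exact_mod_cast hn
        _ ≤ (φ n : ℝ) := by exact_mod_cast hφ.le_apply
    obtain ⟨n, h1, h2, h3, h4⟩ := (ev1.and (ev2.and (ev3.and ev4))).exists
    have H := hlt ((φ n : ℕ) : ℝ)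
    set p := min (S ((φ n : ℕ) : ℝ)) (T ((φ n : ℕ) : ℝ)) with hpdef
    set q := max (S ((φ n : ℕ) : ℝ)) (T ((φ n : ℕ) : ℝ)) with hqdef
    have hpq : p ≤ q := min_le_max
    have hpI : p ∈ Icc (0:ℝ) (2*π) := ⟨le_min (hS _).1 (hT _).1, min_le_of_left_le (hS _).2⟩
    have hqI : q ∈ Icc (0:ℝ) (2*π) := ⟨le_max_of_le_left (hS _).1, max_le (hS _).2 (hT _).2⟩
    have hsub : Icc p q ⊆ Icc (0:ℝ) (2*π) := Icc_subset_Icc hpI.1 hqI.2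
    have hcnorm : ‖γ (S ((φ n : ℕ) : ℝ)) - γ (T ((φ n : ℕ) : ℝ))‖ = ‖γ p - γ q‖ := by
      rcases le_total (S ((φ n : ℕ) : ℝ)) (T ((φ n : ℕ) : ℝ)) with h | h
      · rw [hpdef, hqdef, min_eq_left h, max_eq_right h]
      · rw [hpdef, hqdef, min_eq_right h, max_eq_left h, norm_sub_rev]
    have hc0 : (0:ℝ) ≤ ‖γ p - γ q‖ := norm_nonneg _
    have himg : ∀ u ∈ Icc p q, γ u ∈ ball (γ (min a b)) ε := by
      intro u hu
      apply hδball u (hsub hu)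
      rw [abs_lt] at h1 h2 ⊢
      exact ⟨by linarith [hu.1, h1.1], by linarith [hu.2, h2.2]⟩
    have hrange : ∀ u ∈ Icc p q,
        γ u ∈ (range fun t : ℝ => w * ((t : ℂ) + (b' t : ℂ) * Complex.I)) := by
      intro u hu
      have : γ u ∈ ball (γ (min a b)) ε ∩ J :=
        ⟨himg u hu, hJ ▸ mem_image_of_mem γ (hsub hu)⟩
      rw [hball] at this
      exact this.2
    set f : ℝ → ℝ := fun u => ((starRingEnd ℂ) w * γ u).re with hfdef
    have hwne : (starRingEnd ℂ) w ≠ 0 := by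
      intro h
      apply one_ne_zero (α := ℝ)
      rw [← hw, ← Complex.norm_conj, h, norm_zero]
    have hγeq : ∀ u ∈ Icc p q, ∀ v ∈ Icc p q, f u = f v → γ u = γ v := by
      intro u hu v hv he
      have e1 := graph_param hw (hrange u hu)
      have e2 := graph_param hw (hrange v hv)
      apply mul_left_cancel₀ hwne
      rw [e1, e2]
      simp only [hfdef] at he
      rw [he]
    have hfinj : InjOn f (Icc p q) := fun u hu v hv he =>
      injOn_arc γ hclosed hinj hpI.1 hqI.2 (by linarith) hu hv (hγeq u hu v hv he)
    have hfcont : ContinuousOn f (Icc p q) :=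
      Complex.continuous_re.comp_continuousOn (continuousOn_const.mul (hcont.mono hsub))
    have kb : ∀ u ∈ Icc p q, ∀ v ∈ Icc p q,
        ‖γ u - γ v‖ ≤ L * |f u - f v| ∧ |f u - f v| ≤ ‖γ u - γ v‖ := fun u hu v hv =>
      graph_dist hw hb (hrange u hu) (hrange v hv)
    have key : eVariationOn γ (Icc p q) ≤ ENNReal.ofReal (L * ‖γ p - γ q‖) :=
      arcBound γ hpq hL0 (hfcont.strictMonoOn_of_injOn_Icc' hpq hfinj)
        (fun u hu v hv => (kb u hu v hv).1)
        ((kb p ⟨le_refl _, hpq⟩ q ⟨hpq, le_refl _⟩).2)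
    have e1le : eVariationOn γ (Icc p q) ≤
        ENNReal.ofReal (((φ n : ℕ) : ℝ) * ‖γ (S ((φ n : ℕ) : ℝ)) - γ (T ((φ n : ℕ) : ℝ))‖) := by
      refine key.trans (ENNReal.ofReal_le_ofReal ?_)
      rw [hcnorm]
      exact mul_le_mul_of_nonneg_right (by linarith) hc0
    exact absurd ((min_le_left _ _).trans e1le) (not_le_of_gt H)
  · -- Case B : min a b = 0 and max a b = 2π
    have hmax : max a b = 2 * π := by
      by_contra hne
      have : max a b ∈ Ico (0:ℝ) (2 * π) := ⟨hmaxI.1, lt_of_le_of_ne hmaxI.2 hne⟩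
      exact absurd (hinj ⟨hminI.1, hltab.trans_le hmaxI.2⟩ this hγmm) (ne_of_lt hltab)
    have hmin : min a b = 0 := by
      by_contra hne
      have h0 : γ (min a b) = γ 0 := by rw [hγmm, hmax, hclosed]
      have := hinj ⟨hminI.1, hltab.trans_le hmaxI.2⟩ ⟨le_refl 0, h2π⟩ h0
      exact hne this
    -- Case B continued: setup local graph at γ 0
    have h0I : (0:ℝ) ∈ Icc (0:ℝ) (2*π) := ⟨le_refl _, le_of_lt h2π⟩
    have h2I : (2*π) ∈ Icc (0:ℝ) (2*π) := ⟨le_of_lt h2π, le_refl _⟩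
    have hxJ : γ (0:ℝ) ∈ J := hJ ▸ mem_image_of_mem γ h0I
    obtain ⟨ε, hε, w, hw, b', ⟨K, hb⟩, hball⟩ := hgraph _ hxJ
    set L := 1 + (K:ℝ) with hLdef
    have hL1 : (1:ℝ) ≤ L := le_add_of_nonneg_right K.coe_nonneg
    have hL0 : (0:ℝ) ≤ L := by linarith
    obtain ⟨δ₀, hδ₀, hball₀⟩ : ∃ δ > 0, ∀ u ∈ Icc (0:ℝ) (2*π), |u - 0| < δ →
        γ u ∈ ball (γ (0:ℝ)) ε := by
      obtain ⟨δ, hδ, h⟩ := (Metric.continuousWithinAt_iff.mp (hcont _ h0I)) ε hε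
      exact ⟨δ, hδ, fun u hu hud => mem_ball.2 (h hu (by rwa [Real.dist_eq]))⟩
    obtain ⟨δ₂, hδ₂, hball₂⟩ : ∃ δ > 0, ∀ u ∈ Icc (0:ℝ) (2*π), |u - 2*π| < δ →
        γ u ∈ ball (γ (0:ℝ)) ε := by
      obtain ⟨δ, hδ, h⟩ := (Metric.continuousWithinAt_iff.mp (hcont _ h2I)) ε hε
      refine ⟨δ, hδ, fun u hu hud => mem_ball.2 ?_⟩
      have := h hu (by rwa [Real.dist_eq])
      rwa [← hclosed] at this
    have ev1 : ∀ᶠ n in Filter.atTop, min (S (φ n)) (T (φ n)) < min δ₀ 1 := by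
      have h' := Metric.tendsto_nhds.mp hmn (min δ₀ 1) (lt_min hδ₀ one_pos)
      rw [hmin] at h'
      filter_upwards [h'] with n hn
      rw [Real.dist_eq, sub_zero] at hn
      exact lt_of_le_of_lt (le_abs_self _) hn
    have ev2 : ∀ᶠ n in Filter.atTop, 2*π - max (S (φ n)) (T (φ n)) < min δ₂ 1 := by
      have h' := Metric.tendsto_nhds.mp hMn (min δ₂ 1) (lt_min hδ₂ one_pos)
      rw [hmax] at h'
      filter_upwards [h'] with n hn
      rw [Real.dist_eq, abs_sub_comm] at hn
      exact lt_of_le_of_lt (le_abs_self _) hn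
    have ev4 : ∀ᶠ n in Filter.atTop, 3 * L ≤ (φ n : ℝ) := by
      filter_upwards [Filter.eventually_ge_atTop ⌈3 * L⌉₊] with n hn
      calc 3 * L ≤ (⌈3 * L⌉₊ : ℝ) := Nat.le_ceil _
        _ ≤ (n : ℝ) := by exact_mod_cast hn
        _ ≤ (φ n : ℝ) := by exact_mod_cast hφ.le_apply
    obtain ⟨n, h1, h2, h4⟩ := (ev1.and (ev2.and ev4)).exists
    have H := hlt ((φ n : ℕ) : ℝ)
    set p := min (S ((φ n : ℕ) : ℝ)) (T ((φ n : ℕ) : ℝ)) with hpdef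
    set q := max (S ((φ n : ℕ) : ℝ)) (T ((φ n : ℕ) : ℝ)) with hqdef
    have hpI : p ∈ Icc (0:ℝ) (2*π) := ⟨le_min (hS _).1 (hT _).1, min_le_of_left_le (hS _).2⟩
    have hqI : q ∈ Icc (0:ℝ) (2*π) := ⟨le_max_of_le_left (hS _).1, max_le (hS _).2 (hT _).2⟩
    have hp1 : p < 1 := lt_of_lt_of_le h1 (min_le_right _ _)
    have hpδ : p < δ₀ := lt_of_lt_of_le h1 (min_le_left _ _)
    have hq1 : 2*π - 1 < q := by
      have := lt_of_lt_of_le h2 (min_le_right _ _); linarith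
    have hqδ : 2*π - q < δ₂ := lt_of_lt_of_le h2 (min_le_left _ _)
    have hpq : p < q := by linarith
    have hq0 : (0:ℝ) < q := by linarith
    have hq2 : q ≤ 2*π := hqI.2
    have hcnorm : ‖γ (S ((φ n : ℕ) : ℝ)) - γ (T ((φ n : ℕ) : ℝ))‖ = ‖γ p - γ q‖ := by
      rcases le_total (S ((φ n : ℕ) : ℝ)) (T ((φ n : ℕ) : ℝ)) with h | h
      · rw [hpdef, hqdef, min_eq_left h, max_eq_right h]
      · rw [hpdef, hqdef, min_eq_right h, max_eq_left h, norm_sub_rev]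
    have hc0 : (0:ℝ) ≤ ‖γ p - γ q‖ := norm_nonneg _
    set S2 : Set ℝ := Icc 0 p ∪ Icc q (2*π) with hS2def
    have hS2sub : S2 ⊆ Icc (0:ℝ) (2*π) := by
      rintro u (hu | hu)
      · exact ⟨hu.1, hu.2.trans hpI.2⟩
      · exact ⟨hq0.le.trans hu.1, hu.2⟩
    have himg : ∀ u ∈ S2, γ u ∈ ball (γ (0:ℝ)) ε := by
      rintro u (hu | hu)
      · refine hball₀ u ⟨hu.1, hu.2.trans hpI.2⟩ ?_
        rw [sub_zero, abs_of_nonneg hu.1]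
        linarith [hu.2]
      · refine hball₂ u ⟨hq0.le.trans hu.1, hu.2⟩ ?_
        rw [abs_sub_comm, abs_of_nonneg (by linarith [hu.2] : (0:ℝ) ≤ 2*π - u)]
        linarith [hu.1]
    have hrange : ∀ u ∈ S2,
        γ u ∈ (range fun t : ℝ => w * ((t : ℂ) + (b' t : ℂ) * Complex.I)) := by
      intro u hu
      have : γ u ∈ ball (γ (0:ℝ)) ε ∩ J := ⟨himg u hu, hJ ▸ mem_image_of_mem γ (hS2sub hu)⟩
      rw [hball] at this
      exact this.2
    -- the wrapped curve
    set γw : ℝ → ℂ := fun u => if u ≤ 2*π then γ u else γ (u - 2*π) with hγwdef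
    have hγw_left : ∀ u, u ≤ 2*π → γw u = γ u := by
      intro u hu; simp only [hγwdef]; exact if_pos hu
    have hγw_right : ∀ u, 2*π < u → γw u = γ (u - 2*π) := by
      intro u hu; simp only [hγwdef]; exact if_neg (not_le.2 hu)
    have hqIw : q ≤ p + 2*π := by linarith [hq2, hpI.1]
    -- the wrap map
    set W : ℝ → ℝ := fun u => if u ≤ p then u + 2*π else u with hWdef
    have hW : ∀ u ∈ S2, W u ∈ Icc q (p + 2*π) ∧ γw (W u) = γ u := by
      rintro u (hu | hu)
      · have hWu : W u = u + 2*π := by simp only [hWdef]; exact if_pos hu.2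
        refine ⟨by rw [hWu]; exact ⟨by linarith [hu.1], by linarith [hu.2]⟩, ?_⟩
        rw [hWu]
        rcases eq_or_lt_of_le hu.1 with h0 | h0
        · rw [← h0, zero_add, hγw_left _ (le_refl _), ← hclosed]
        · rw [hγw_right _ (by linarith), add_sub_cancel_right]
      · have hWu : W u = u := by
          simp only [hWdef]; exact if_neg (by push_neg; linarith [hu.1])
        rw [hWu]
        exact ⟨⟨hu.1, by linarith [hu.2, hpI.1]⟩, hγw_left _ hu.2⟩
    have hγwrange : ∀ u ∈ Icc q (p + 2*π),
        γw u ∈ (range fun t : ℝ => w * ((t : ℂ) + (b' t : ℂ) * Complex.I)) := by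
      intro u hu
      rcases le_or_gt u (2*π) with h | h
      · rw [hγw_left _ h]
        exact hrange u (Or.inr ⟨hu.1, h⟩)
      · rw [hγw_right _ h]
        exact hrange (u - 2*π) (Or.inl ⟨by linarith, by linarith [hu.2]⟩)
    -- continuity of the wrapped curve
    have hγwcont : ContinuousOn γw (Icc q (p + 2*π)) := by
      simp only [hγwdef]
      apply ContinuousOn.if
      · intro a' ha'
        have ha2 : a' = 2*π := by
          have h' := ha'.2
          rw [show {a : ℝ | a ≤ 2*π} = Iic (2*π) from rfl, frontier_Iic] at h'
          exact h'
        rw [ha2, sub_self, ← hclosed]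
      · apply hcont.mono
        intro u hu
        rw [show {a : ℝ | a ≤ 2*π} = Iic (2*π) from rfl, closure_Iic] at hu
        exact ⟨hq0.le.trans hu.1.1, hu.2⟩
      · apply ContinuousOn.comp hcont ((continuous_id.sub continuous_const).continuousOn)
        intro u hu
        have h' : 2*π ≤ u := by
          have := hu.2
          rw [show {a : ℝ | ¬ a ≤ 2*π} = Ioi (2*π) from by ext y; simp, closure_Ioi] at this
          exact this
        have h'' : u ≤ p + 2*π := hu.1.2
        exact ⟨by simp only [Pi.sub_apply, id_eq]; linarith, by simp only [Pi.sub_apply, id_eq]; linarith [hpI.2]⟩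
    -- injectivity of the wrapped curve
    have hγwinj : InjOn γw (Icc q (p + 2*π)) := by
      have key : ∀ u ∈ Icc q (p + 2*π), ∀ v ∈ Icc q (p + 2*π),
          γw u = γw v → u < v → False := by
        intro u hu v hv he huv
        rcases le_or_gt v (2*π) with hv2 | hv2
        · rw [hγw_left _ hv2, hγw_left _ (huv.le.trans hv2)] at he
          exact (ne_of_lt huv) (injOn_arc γ hclosed hinj hq0.le (le_refl (2*π))
            (by linarith) ⟨hu.1, huv.le.trans hv2⟩ ⟨hv.1, hv2⟩ he)
        · rw [hγw_right _ hv2] at he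
          have hv2' : v - 2*π ∈ Ico (0:ℝ) (2*π) :=
            ⟨by linarith, by linarith [hv.2, hp1]⟩
          rcases le_or_gt u (2*π) with hu2 | hu2
          · rw [hγw_left _ hu2] at he
            rcases eq_or_lt_of_le hu2 with hu2e | hu2l
            · have h0 : γ 0 = γ (v - 2*π) := by
                rw [hclosed]; rw [hu2e] at he; exact he
              have := hinj ⟨le_refl 0, h2π⟩ hv2' h0
              linarith [hv2]
            · have hu' : u ∈ Ico (0:ℝ) (2*π) := ⟨hq0.le.trans hu.1, hu2l⟩
              have heq' := hinj hu' hv2' he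
              have hvp : v - 2*π ≤ p := by linarith [hv.2]
              linarith [hu.1]
          · rw [hγw_right _ hu2] at he
            have hu2' : u - 2*π ∈ Ico (0:ℝ) (2*π) :=
              ⟨by linarith, by linarith [hu.2, hp1]⟩
            have := hinj hu2' hv2' he
            linarith
      intro u hu v hv he
      rcases lt_trichotomy u v with h | h | h
      · exact absurd (key u hu v hv he h) id
      · exact h
      · exact absurd (key v hv u hu he.symm h) id
    -- the parameter function of the wrapped curve
    set fw : ℝ → ℝ := fun u => ((starRingEnd ℂ) w * γw u).re with hfwdef
    have hwne : (starRingEnd ℂ) w ≠ 0 := by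
      intro h
      apply one_ne_zero (α := ℝ)
      rw [← hw, ← Complex.norm_conj, h, norm_zero]
    have hfwinj : InjOn fw (Icc q (p + 2*π)) := by
      intro u hu v hv he
      apply hγwinj hu hv
      have e1 := graph_param hw (hγwrange u hu)
      have e2 := graph_param hw (hγwrange v hv)
      apply mul_left_cancel₀ hwne
      rw [e1, e2]
      simp only [hfwdef] at he
      rw [he]
    have hfwcont : ContinuousOn fw (Icc q (p + 2*π)) :=
      Complex.continuous_re.comp_continuousOn (continuousOn_const.mul hγwcont)
    have kbw : ∀ u ∈ Icc q (p + 2*π), ∀ v ∈ Icc q (p + 2*π),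
        ‖γw u - γw v‖ ≤ L * |fw u - fw v| ∧ |fw u - fw v| ≤ ‖γw u - γw v‖ :=
      fun u hu v hv => graph_dist hw hb (hγwrange u hu) (hγwrange v hv)
    obtain ⟨F, hF, hFabs⟩ : ∃ F : ℝ → ℝ, MonotoneOn F (Icc q (p + 2*π)) ∧
        ∀ u v, |F u - F v| = |fw u - fw v| := by
      rcases hfwcont.strictMonoOn_of_injOn_Icc' hqIw hfwinj with hm | hm
      · exact ⟨fw, hm.monotoneOn, fun u v => rfl⟩
      · refine ⟨fun u => -fw u, ?_, fun u v => by
          rw [show -fw u - -fw v = fw v - fw u by ring, abs_sub_comm]⟩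
        intro u hu v hv huv
        rcases eq_or_lt_of_le huv with h | h
        · subst h; exact le_rfl
        · exact le_of_lt (neg_lt_neg (hm hu hv h))
    -- endpoints
    have hqmem : q ∈ Icc q (p + 2*π) := ⟨le_refl _, hqIw⟩
    have h2mem : 2*π ∈ Icc q (p + 2*π) := ⟨hq2, by linarith [hpI.1]⟩
    have hpmem : p + 2*π ∈ Icc q (p + 2*π) := ⟨hqIw, le_refl _⟩
    set Δ := F (p + 2*π) - F q with hΔdef
    have hΔ0 : (0:ℝ) ≤ Δ := sub_nonneg.2 (hF hqmem hpmem hqIw)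
    have hWp := hW p (Or.inl ⟨hpI.1, le_refl _⟩)
    have hWq := hW q (Or.inr ⟨le_refl _, hq2⟩)
    have hWpval : W p = p + 2*π := by simp only [hWdef]; exact if_pos (le_refl _)
    have hWqval : W q = q := by simp only [hWdef]; exact if_neg (not_le.2 hpq)
    have hγwp : γw (p + 2*π) = γ p := by
      conv_lhs => rw [← hWpval]
      exact hWp.2
    have hγwq : γw q = γ q := by
      conv_lhs => rw [← hWqval]
      exact hWq.2
    have hΔc : Δ ≤ ‖γ p - γ q‖ := by
      calc Δ ≤ |F (p + 2*π) - F q| := le_abs_self _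
        _ = |fw (p + 2*π) - fw q| := hFabs _ _
        _ ≤ ‖γw (p + 2*π) - γw q‖ := (kbw _ hpmem _ hqmem).2
        _ = ‖γ p - γ q‖ := by rw [hγwp, hγwq]
    -- the comparison function g for the complementary arc
    set g : ℝ → ℝ := fun u => if u ≤ p then L * F (W u) else L * F (W u) + 2*(L*Δ) with hgdef
    have hglow : ∀ u ∈ Icc (0:ℝ) p, g u = L * F (u + 2*π) := by
      intro u hu
      simp only [hgdef]
      rw [if_pos hu.2, show W u = u + 2*π from by simp only [hWdef]; exact if_pos hu.2]
    have hghigh : ∀ u ∈ Icc q (2*π), g u = L * F u + 2*(L*Δ) := by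
      intro u hu
      have hup : ¬ u ≤ p := not_le.2 (lt_of_lt_of_le hpq hu.1)
      simp only [hgdef]
      rw [if_neg hup, show W u = u from by simp only [hWdef]; exact if_neg hup]
    -- range facts about F on the two pieces
    have hFlow : ∀ u ∈ Icc (0:ℝ) p, F (2*π) ≤ F (u + 2*π) ∧ F (u + 2*π) ≤ F (p + 2*π) := by
      intro u hu
      have hmem : u + 2*π ∈ Icc q (p + 2*π) := ⟨by linarith [hu.1], by linarith [hu.2]⟩
      exact ⟨hF h2mem hmem (by linarith [hu.1]), hF hmem hpmem (by linarith [hu.2])⟩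
    have hFhigh : ∀ u ∈ Icc q (2*π), F q ≤ F u ∧ F u ≤ F (2*π) := by
      intro u hu
      have hmem : u ∈ Icc q (p + 2*π) := ⟨hu.1, by linarith [hu.2, hpI.1]⟩
      exact ⟨hF hqmem hmem hu.1, hF hmem h2mem hu.2⟩
    -- key comparison
    have claim : ∀ u ∈ S2, ∀ v ∈ S2, u ≤ v → L * |F (W v) - F (W u)| ≤ g v - g u := by
      rintro u (hu | hu) v (hv | hv) huv
      · -- low low
        have hWuv : W u = u + 2*π := by simp only [hWdef]; exact if_pos hu.2
        have hWvv : W v = v + 2*π := by simp only [hWdef]; exact if_pos hv.2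
        have humem : u + 2*π ∈ Icc q (p + 2*π) := ⟨by linarith [hu.1], by linarith [hu.2]⟩
        have hvmem : v + 2*π ∈ Icc q (p + 2*π) := ⟨by linarith [hv.1], by linarith [hv.2]⟩
        have hm' : F (u + 2*π) ≤ F (v + 2*π) := hF humem hvmem (by linarith)
        rw [hglow u hu, hglow v hv, hWuv, hWvv, abs_of_nonneg (sub_nonneg.2 hm')]
        have : L * (F (v + 2*π) - F (u + 2*π)) = L * F (v + 2*π) - L * F (u + 2*π) := by ring
        linarith [this]
      · -- low high
        have hWuv : W u = u + 2*π := by simp only [hWdef]; exact if_pos hu.2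
        have hWvv : W v = v := by
          simp only [hWdef]; exact if_neg (not_le.2 (lt_of_lt_of_le hpq hv.1))
        have hA1 : F v ≤ F (2*π) := (hFhigh v hv).2
        have hA2 : F (2*π) ≤ F (u + 2*π) := (hFlow u hu).1
        have hA3 : F (u + 2*π) ≤ F (p + 2*π) := (hFlow u hu).2
        have hA4 : F q ≤ F v := (hFhigh v hv).1
        have habs : |F (W v) - F (W u)| = F (u + 2*π) - F v := by
          rw [hWuv, hWvv, abs_sub_comm, abs_of_nonneg (by linarith)]
        rw [habs, hglow u hu, hghigh v hv]
        have hAΔ : F (u + 2*π) - F v ≤ Δ := by rw [hΔdef]; linarith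
        have hprod : 0 ≤ L * (Δ - (F (u + 2*π) - F v)) :=
          mul_nonneg hL0 (by linarith)
        have hexp : L * (Δ - (F (u + 2*π) - F v)) = L*Δ - L*F (u + 2*π) + L*F v := by ring
        have hexp2 : L * (F (u + 2*π) - F v) = L*F (u + 2*π) - L*F v := by ring
        linarith [hprod, hexp, hexp2]
      · -- high low : impossible
        exact absurd huv (not_le.2 (by linarith [hu.1, hv.2]))
      · -- high high
        have hWuv : W u = u := by
          simp only [hWdef]; exact if_neg (not_le.2 (lt_of_lt_of_le hpq hu.1))
        have hWvv : W v = v := by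
          simp only [hWdef]; exact if_neg (not_le.2 (lt_of_lt_of_le hpq hv.1))
        have humem : u ∈ Icc q (p + 2*π) := ⟨hu.1, by linarith [hu.2, hpI.1]⟩
        have hvmem : v ∈ Icc q (p + 2*π) := ⟨hv.1, by linarith [hv.2, hpI.1]⟩
        have hm' : F u ≤ F v := hF humem hvmem huv
        rw [hghigh u hu, hghigh v hv, hWuv, hWvv, abs_of_nonneg (sub_nonneg.2 hm')]
        have : L * (F v - F u) = (L * F v + 2*(L*Δ)) - (L * F u + 2*(L*Δ)) := by ring
        linarith [this]
    -- bounds on g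
    have gbounds : ∀ u ∈ S2, L * F q ≤ g u ∧ g u ≤ L * F q + 3*(L*Δ) := by
      rintro u (hu | hu)
      · rw [hglow u hu]
        have h1' := (hFlow u hu).1
        have h2' := (hFlow u hu).2
        have h3' : F q ≤ F (2*π) := hF hqmem h2mem hq2
        have hLΔ : 0 ≤ L * Δ := mul_nonneg hL0 hΔ0
        constructor
        · exact mul_le_mul_of_nonneg_left (h3'.trans h1') hL0
        · have hle : F (u + 2*π) ≤ F q + Δ := by rw [hΔdef]; linarith
          calc L * F (u + 2*π) ≤ L * (F q + Δ) := mul_le_mul_of_nonneg_left hle hL0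
            _ = L * F q + L * Δ := by ring
            _ ≤ L * F q + 3*(L*Δ) := by linarith
      · rw [hghigh u hu]
        have h1' := (hFhigh u hu).1
        have h2' := (hFhigh u hu).2
        have h3' : F (2*π) ≤ F (p + 2*π) := hF h2mem hpmem (by linarith [hpI.1])
        have hLΔ : 0 ≤ L * Δ := mul_nonneg hL0 hΔ0
        constructor
        · have := mul_le_mul_of_nonneg_left h1' hL0
          linarith
        · have hle : F u ≤ F q + Δ := by rw [hΔdef]; linarith
          have := mul_le_mul_of_nonneg_left hle hL0
          have hex : L * (F q + Δ) = L * F q + L * Δ := by ring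
          linarith
    -- variation bound on the complementary arc
    have keyB : eVariationOn γ S2 ≤ ENNReal.ofReal (3*(L*‖γ p - γ q‖)) := by
      apply evar_le_of_mono γ S2 g
      · intro u hu v hv huv
        rw [edist_dist, dist_eq_norm]
        apply ENNReal.ofReal_le_ofReal
        calc ‖γ v - γ u‖ = ‖γw (W v) - γw (W u)‖ := by rw [(hW v hv).2, (hW u hu).2]
          _ ≤ L * |fw (W v) - fw (W u)| := (kbw _ (hW v hv).1 _ (hW u hu).1).1
          _ = L * |F (W v) - F (W u)| := by rw [hFabs]
          _ ≤ g v - g u := claim u hu v hv huv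
      · intro u hu v hv huv
        have hcl := claim u hu v hv huv
        have h0' : 0 ≤ L * |F (W v) - F (W u)| :=
          mul_nonneg hL0 (abs_nonneg _)
        linarith
      · intro u hu v hv
        have g1 := (gbounds u hu).1
        have g2 := (gbounds v hv).2
        have h3LΔ : L * Δ ≤ L * ‖γ p - γ q‖ := mul_le_mul_of_nonneg_left hΔc hL0
        linarith
    have e2le : eVariationOn γ S2 ≤
        ENNReal.ofReal (((φ n : ℕ) : ℝ) * ‖γ (S ((φ n : ℕ) : ℝ)) - γ (T ((φ n : ℕ) : ℝ))‖) := by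
      refine keyB.trans (ENNReal.ofReal_le_ofReal ?_)
      rw [hcnorm]
      have hmul : 0 ≤ (((φ n : ℕ) : ℝ) - 3*L) * ‖γ p - γ q‖ :=
        mul_nonneg (by linarith) hc0
      have hexp : (((φ n : ℕ) : ℝ) - 3*L) * ‖γ p - γ q‖ =
          ((φ n : ℕ) : ℝ) * ‖γ p - γ q‖ - 3*(L*‖γ p - γ q‖) := by ring
      linarith [hmul, hexp]
    exact absurd ((min_le_right _ _).trans e2le) (not_le_of_gt H)
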